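/- The number of parking sequences satisfies the recurrence f(y_1,...,y_n, y_{n+1}; z) = ∑_{L ⊔ R = {1,...,n}} (z + ∑_{l ∈ L} y_l) · f(y_L; z) · f(y_R; 1), where the sum is over ordered pairs of disjoint sets L, R with union {1,...,n}, and y_S denotes the subsequence of sizes indexed by S in increasing order. -/

import Mathlib

/-- The first empty spot `j ≥ c`, given the finite set `occ` of occupied spots. -/
def firstFree (occ : Finset ℕ) (c : ℕ) : ℕ :=
  Nat.find (p := fun j => c ≤ j ∧ j ∉ occ)
    (by
      refine ⟨occ.sup id + c + 1, by omega, fun h => ?_⟩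
      have := Finset.le_sup (f := id) h
      simp only [id] at this
      omega)

/-- One step of the parking process on spots `1, …, N`: the car with preference and
size `cs = (c, s)` drives to the first empty spot `j ≥ c` and parks in spots
`j, …, j+s-1` if they are all empty and within the `N` spots; otherwise failure. -/
def parkStep (N : ℕ) (occ : Option (Finset ℕ)) (cs : ℕ × ℕ) : Option (Finset ℕ) :=
  match occ with
  | none => none
  | some occ =>
    let j := firstFree occ cs.1
    if j + cs.2 - 1 ≤ N ∧ ∀ k ∈ Finset.Ico j (j + cs.2), k ∉ occ then
      some (occ ∪ Finset.Ico j (j + cs.2))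
    else none

/-- The result of letting cars `C₁, …, Cₙ` of sizes `y` and preferences `c` park in
order on `z - 1 + ∑ y i` spots, where the first `z - 1` spots are occupied by a
trailer: `some occ` records the occupied spots, `none` records failure. -/
def parkFold (n : ℕ) (y : Fin n → ℕ) (z : ℕ) (c : Fin n → ℕ) : Option (Finset ℕ) :=
  (List.ofFn fun i : Fin n => ((c i, y i) : ℕ × ℕ)).foldl
    (parkStep (z - 1 + ∑ i, y i)) (some (Finset.Ico 1 z))

/-- `(c₁, …, cₙ)` is a parking sequence for car sizes `y` and a trailer of length
`z - 1` if all preferences are genuine spots and all cars park successfully. -/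
def IsParkingSeq (n : ℕ) (y : Fin n → ℕ) (z : ℕ) (c : Fin n → ℕ) : Prop :=
  (∀ i, 1 ≤ c i) ∧ parkFold n y z c ≠ none

instance (n : ℕ) (y : Fin n → ℕ) (z : ℕ) : DecidablePred (IsParkingSeq n y z) :=
  fun c => by unfold IsParkingSeq; infer_instance

/-- The number of parking sequences for car sizes `y` and a trailer of length `z - 1`. -/
def numPark (n : ℕ) (y : Fin n → ℕ) (z : ℕ) : ℕ :=
  ((Fintype.piFinset fun _ : Fin n => Finset.Icc 1 (z - 1 + ∑ i, y i)).filter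
    (IsParkingSeq n y z)).card

lemma firstFree_le_spec (occ : Finset ℕ) (c : ℕ) : c ≤ firstFree occ c :=
  (Nat.find_spec (p := fun j => c ≤ j ∧ j ∉ occ) _).1

lemma firstFree_not_mem (occ : Finset ℕ) (c : ℕ) : firstFree occ c ∉ occ :=
  (Nat.find_spec (p := fun j => c ≤ j ∧ j ∉ occ) _).2

lemma mem_of_lt_firstFree {occ : Finset ℕ} {c k : ℕ} (h1 : c ≤ k)
    (h2 : k < firstFree occ c) : k ∈ occ := by
  unfold firstFree at h2
  have := Nat.find_min _ h2
  simp only [not_and, not_not] at this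
  exact this h1

lemma firstFree_eq {occ : Finset ℕ} {c f : ℕ} (h1 : c ≤ f) (h2 : f ∉ occ)
    (h3 : ∀ k, c ≤ k → k < f → k ∈ occ) : firstFree occ c = f := by
  have hle : firstFree occ c ≤ f := Nat.find_min' _ ⟨h1, h2⟩
  rcases lt_or_eq_of_le hle with h | h
  · exact absurd (h3 _ (firstFree_le_spec occ c) h) (firstFree_not_mem occ c)
  · exact h

lemma parkStep_some_iff {N : ℕ} {occ occ' : Finset ℕ} {cs : ℕ × ℕ} :
    parkStep N (some occ) cs = some occ' ↔
      (firstFree occ cs.1 + cs.2 - 1 ≤ N ∧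
        ∀ k ∈ Finset.Ico (firstFree occ cs.1) (firstFree occ cs.1 + cs.2), k ∉ occ) ∧
      occ' = occ ∪ Finset.Ico (firstFree occ cs.1) (firstFree occ cs.1 + cs.2) := by
  have hrw : parkStep N (some occ) cs =
      if (firstFree occ cs.1 + cs.2 - 1 ≤ N ∧
          ∀ k ∈ Finset.Ico (firstFree occ cs.1) (firstFree occ cs.1 + cs.2), k ∉ occ) then
        some (occ ∪ Finset.Ico (firstFree occ cs.1) (firstFree occ cs.1 + cs.2))
      else none := rfl
  rw [hrw]
  split_ifs with h
  · rw [Option.some_inj]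
    exact ⟨fun he => ⟨h, he.symm⟩, fun hp => hp.2.symm⟩
  · exact ⟨fun he => by simp at he, fun hp => absurd hp.1 h⟩

lemma foldl_parkStep_none (N : ℕ) (l : List (ℕ × ℕ)) :
    l.foldl (parkStep N) none = none := by
  induction l with
  | nil => rfl
  | cons a l ih => simpa [parkStep] using ih

lemma foldl_parkStep_some {N : ℕ} {l : List (ℕ × ℕ)} {o : Option (Finset ℕ)}
    {occ' : Finset ℕ} (h : l.foldl (parkStep N) o = some occ') :
    ∃ occ, o = some occ := by
  cases o with
  | none => rw [foldl_parkStep_none] at h; exact absurd h (by simp)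
  | some occ => exact ⟨occ, rfl⟩

lemma subset_of_foldl_parkStep {N : ℕ} {l : List (ℕ × ℕ)} {occ occ' : Finset ℕ}
    (h : l.foldl (parkStep N) (some occ) = some occ') : occ ⊆ occ' := by
  induction l generalizing occ with
  | nil => simp_all
  | cons a l ih =>
    simp only [List.foldl_cons] at h
    obtain ⟨occ1, h1⟩ := foldl_parkStep_some h
    rw [h1] at h
    refine subset_trans ?_ (ih h)
    rcases (parkStep_some_iff.mp h1).2 with rfl
    exact Finset.subset_union_left

lemma card_of_foldl_parkStep {N : ℕ} {l : List (ℕ × ℕ)} {occ occ' : Finset ℕ}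
    (h : l.foldl (parkStep N) (some occ) = some occ') :
    occ'.card = occ.card + (l.map Prod.snd).sum := by
  induction l generalizing occ with
  | nil => simp_all
  | cons a l ih =>
    simp only [List.foldl_cons] at h
    obtain ⟨occ1, h1⟩ := foldl_parkStep_some h
    rw [h1] at h
    obtain ⟨⟨_, hd⟩, rfl⟩ := parkStep_some_iff.mp h1
    rw [ih h, Finset.card_union_of_disjoint (by
      rw [Finset.disjoint_right]; intro k hk; exact hd k hk)]
    simp [Nat.card_Ico]
    ring

lemma bounded_of_foldl_parkStep {N : ℕ} {l : List (ℕ × ℕ)} {occ occ' : Finset ℕ}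
    (hc : ∀ p ∈ l, 1 ≤ p.1) (hocc : ∀ k ∈ occ, 1 ≤ k ∧ k ≤ N)
    (h : l.foldl (parkStep N) (some occ) = some occ') : ∀ k ∈ occ', 1 ≤ k ∧ k ≤ N := by
  induction l generalizing occ with
  | nil => simp_all
  | cons a l ih =>
    simp only [List.foldl_cons] at h
    obtain ⟨occ1, h1⟩ := foldl_parkStep_some h
    rw [h1] at h
    obtain ⟨⟨hN, _⟩, rfl⟩ := parkStep_some_iff.mp h1
    refine ih (fun p hp => hc p (List.mem_cons_of_mem _ hp)) ?_ h
    intro k hk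
    rcases Finset.mem_union.mp hk with hk | hk
    · exact hocc k hk
    · have := hc a (List.mem_cons_self)
      have := firstFree_le_spec occ a.1
      simp only [Finset.mem_Ico] at hk
      omega


lemma parkStep_some_iff' {N : ℕ} {occ occ' : Finset ℕ} {c t : ℕ} :
    parkStep N (some occ) (c, t) = some occ' ↔
      (firstFree occ c + t - 1 ≤ N ∧
        ∀ k ∈ Finset.Ico (firstFree occ c) (firstFree occ c + t), k ∉ occ) ∧
      occ' = occ ∪ Finset.Ico (firstFree occ c) (firstFree occ c + t) :=
  parkStep_some_iff

lemma mem_shift {o : ℕ} {RO : Finset ℕ} {k : ℕ} :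
    k ∈ RO.image (· + o) ↔ ∃ r ∈ RO, r + o = k := Finset.mem_image

lemma shift_ge {o : ℕ} {RO : Finset ℕ} (hRO : ∀ k ∈ RO, 1 ≤ k) :
    ∀ k ∈ RO.image (· + o), o + 1 ≤ k := by
  intro k hk
  obtain ⟨r, hr, rfl⟩ := mem_shift.mp hk
  have := hRO r hr
  omega

lemma left_step {j o N : ℕ} {LO RO LO' : Finset ℕ} {c t : ℕ}
    (hjo : j ≤ o) (hoN : o ≤ N)
    (hRO : ∀ k ∈ RO, 1 ≤ k)
    (hc : 1 ≤ c) (ht : 1 ≤ t)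
    (h : parkStep (j - 1) (some LO) (c, t) = some LO') :
    parkStep N (some (LO ∪ RO.image (· + o))) (c, t) = some (LO' ∪ RO.image (· + o)) := by
  obtain ⟨⟨hN', hdisj⟩, rfl⟩ := parkStep_some_iff'.mp h
  set f := firstFree LO c with hfdef
  have hf : c ≤ f := firstFree_le_spec LO c
  have hfj : f + t - 1 ≤ j - 1 := hN'
  have hkey : firstFree (LO ∪ RO.image (· + o)) c = f := by
    refine firstFree_eq hf ?_ fun k hk1 hk2 => Finset.mem_union_left _ (mem_of_lt_firstFree hk1 hk2)
    intro hmem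
    rcases Finset.mem_union.mp hmem with hm | hm
    · exact firstFree_not_mem LO c hm
    · have := shift_ge hRO f hm; omega
  rw [parkStep_some_iff']
  refine ⟨⟨?_, ?_⟩, ?_⟩
  · simp only [hkey]; omega
  · simp only [hkey]
    intro k hk
    simp only [Finset.mem_Ico] at hk
    intro hmem
    rcases Finset.mem_union.mp hmem with hm | hm
    · exact hdisj k (Finset.mem_Ico.mpr hk) hm
    · have := shift_ge hRO k hm; omega
  · simp only [hkey]
    rw [Finset.union_right_comm]

lemma left_step_inv {j : ℕ} {LO LO' : Finset ℕ} {c t : ℕ}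
    (hLO : ∀ k ∈ LO, 1 ≤ k ∧ k ≤ j - 1) (hc : 1 ≤ c) (ht : 1 ≤ t)
    (h : parkStep (j - 1) (some LO) (c, t) = some LO') :
    ∀ k ∈ LO', 1 ≤ k ∧ k ≤ j - 1 := by
  obtain ⟨⟨hN', _⟩, rfl⟩ := parkStep_some_iff'.mp h
  intro k hk
  rcases Finset.mem_union.mp hk with hm | hm
  · exact hLO k hm
  · simp only [Finset.mem_Ico] at hm
    have := firstFree_le_spec LO c
    omega

lemma right_step {j o N : ℕ} {LO RO RO' : Finset ℕ} {c t : ℕ}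
    (hjo : j ≤ o) (hoN : o ≤ N)
    (hLO : ∀ k ∈ LO, 1 ≤ k ∧ k ≤ j - 1)
    (hc : 1 ≤ c) (ht : 1 ≤ t)
    (h : parkStep (N - o) (some RO) (c, t) = some RO') :
    parkStep N (some (LO ∪ RO.image (· + o))) (c + o, t) =
      some (LO ∪ RO'.image (· + o)) := by
  obtain ⟨⟨hN', hdisj⟩, rfl⟩ := parkStep_some_iff'.mp h
  set f := firstFree RO c with hfdef
  have hf : c ≤ f := firstFree_le_spec RO c
  have hkey : firstFree (LO ∪ RO.image (· + o)) (c + o) = f + o := by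
    refine firstFree_eq (by omega) ?_ ?_
    · intro hmem
      rcases Finset.mem_union.mp hmem with hm | hm
      · have := hLO _ hm; omega
      · obtain ⟨r, hr, hre⟩ := mem_shift.mp hm
        have : r = f := by omega
        subst this
        exact firstFree_not_mem RO c hr
    · intro k hk1 hk2
      refine Finset.mem_union_right _ (mem_shift.mpr ⟨k - o, ?_, by omega⟩)
      have : k - o < f := by omega
      exact mem_of_lt_firstFree (by omega) this
  rw [parkStep_some_iff', hkey]
  refine ⟨⟨?_, ?_⟩, ?_⟩
  · omega
  · intro k hk
    simp only [Finset.mem_Ico] at hk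
    intro hmem
    rcases Finset.mem_union.mp hmem with hm | hm
    · have := hLO _ hm; omega
    · obtain ⟨r, hr, hre⟩ := mem_shift.mp hm
      refine hdisj r (Finset.mem_Ico.mpr ⟨by omega, by omega⟩) hr
  · rw [Finset.image_union, Finset.image_add_right_Ico, Finset.union_assoc,
      Nat.add_right_comm f t o]

lemma right_step_inv {o N : ℕ} {RO RO' : Finset ℕ} {c t : ℕ}
    (hRO : ∀ k ∈ RO, 1 ≤ k) (hc : 1 ≤ c) (ht : 1 ≤ t)
    (h : parkStep (N - o) (some RO) (c, t) = some RO') :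
    ∀ k ∈ RO', 1 ≤ k := by
  obtain ⟨⟨_, _⟩, rfl⟩ := parkStep_some_iff'.mp h
  intro k hk
  rcases Finset.mem_union.mp hk with hm | hm
  · exact hRO k hm
  · simp only [Finset.mem_Ico] at hm
    have := firstFree_le_spec RO c
    omega

lemma combined_step_cases {j o N : ℕ} {LO RO occ' : Finset ℕ} {c t : ℕ}
    (hjo : j ≤ o) (hoN : o ≤ N)
    (hLO : ∀ k ∈ LO, 1 ≤ k ∧ k ≤ j - 1) (hRO : ∀ k ∈ RO, 1 ≤ k)
    (hj : 1 ≤ j) (hc : 1 ≤ c) (ht : 1 ≤ t)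
    (h : parkStep N (some (LO ∪ RO.image (· + o))) (c, t) = some occ')
    (hhole : ∀ k, j ≤ k → k ≤ o → k ∉ occ') :
    (∃ LO', parkStep (j - 1) (some LO) (c, t) = some LO' ∧
        occ' = LO' ∪ RO.image (· + o)) ∨
    (o + 1 ≤ c ∧ ∃ RO', parkStep (N - o) (some RO) (c - o, t) = some RO' ∧
        occ' = LO ∪ RO'.image (· + o)) := by
  obtain ⟨⟨hN', hdisj⟩, rfl⟩ := parkStep_some_iff'.mp h
  set C := LO ∪ RO.image (· + o) with hC
  set f := firstFree C c with hfdef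
  have hf : c ≤ f := firstFree_le_spec C c
  have hfC : f ∉ C := firstFree_not_mem C c
  have hCsub : ∀ k ∈ C, k < j ∨ o + 1 ≤ k := by
    intro k hk
    rcases Finset.mem_union.mp hk with hm | hm
    · have := hLO k hm; left; omega
    · right; exact shift_ge hRO k hm
  -- the block [f, f+t) avoids the hole [j, o]
  have hblock_hole : ∀ k, f ≤ k → k < f + t → ¬ (j ≤ k ∧ k ≤ o) := by
    intro k h1 h2 ⟨h3, h4⟩
    exact hhole k h3 h4 (Finset.mem_union_right _ (Finset.mem_Ico.mpr ⟨h1, h2⟩))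
  have hcases : f + t - 1 ≤ j - 1 ∨ o + 1 ≤ f := by
    by_contra hcon
    push_neg at hcon
    obtain ⟨h1, h2⟩ := hcon
    -- f ≤ o and f + t - 1 ≥ j ; pick k = max f j in the block and in the hole
    exact hblock_hole (max f j) (le_max_left _ _) (by omega) ⟨le_max_right _ _, by omega⟩
  rcases hcases with hleft | hright
  · -- left case
    left
    have hfj : f < j := by omega
    have hkeyL : firstFree LO c = f := by
      refine firstFree_eq hf (fun hm => hfC (Finset.mem_union_left _ hm)) ?_
      intro k hk1 hk2
      have hkC := mem_of_lt_firstFree hk1 hk2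
      rcases Finset.mem_union.mp hkC with hm | hm
      · exact hm
      · have := shift_ge hRO k hm; omega
    refine ⟨LO ∪ Finset.Ico f (f + t), ?_, ?_⟩
    · rw [parkStep_some_iff', hkeyL]
      exact ⟨⟨hleft, fun k hk hm => hdisj k hk (Finset.mem_union_left _ hm)⟩, rfl⟩
    · rw [hC, Finset.union_right_comm]
  · -- right case
    right
    have hcgt : o + 1 ≤ c := by
      by_contra hcon
      push_neg at hcon
      -- max c j is in [c, f) so occupied, but in hole
      have hmem : max c j ∈ C := mem_of_lt_firstFree (le_max_left _ _) (by omega)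
      rcases hCsub _ hmem with hm | hm
      · omega
      · omega
    refine ⟨hcgt, RO ∪ Finset.Ico (f - o) (f - o + t), ?_, ?_⟩
    · have hkeyR : firstFree RO (c - o) = f - o := by
        refine firstFree_eq (by omega) ?_ ?_
        · intro hm
          exact hfC (Finset.mem_union_right _ (mem_shift.mpr ⟨f - o, hm, by omega⟩))
        · intro k hk1 hk2
          have hkC : k + o ∈ C := mem_of_lt_firstFree (occ := C) (c := c) (by omega) (by omega)
          rcases Finset.mem_union.mp hkC with hm | hm
          · have := hLO _ hm; omega
          · obtain ⟨r, hr, hre⟩ := mem_shift.mp hm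
            have : r = k := by omega
            subst this; exact hr
      rw [parkStep_some_iff', hkeyR]
      refine ⟨⟨by omega, ?_⟩, rfl⟩
      intro k hk hm
      simp only [Finset.mem_Ico] at hk
      refine hdisj (k + o) (Finset.mem_Ico.mpr ⟨by omega, by omega⟩)
        (Finset.mem_union_right _ (mem_shift.mpr ⟨k, hm, rfl⟩))
    · have himg : (Finset.Ico (f - o) (f - o + t)).image (· + o) = Finset.Ico f (f + t) := by
        rw [Finset.image_add_right_Ico]
        congr 1 <;> omega
      rw [Finset.image_union, himg, ← Finset.union_assoc, ← hC]
/-- Untag a tagged car: right cars (tag `false`) get their preference shifted by `o`. -/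
def untag (o : ℕ) (x : Bool × ℕ × ℕ) : ℕ × ℕ :=
  if x.1 then x.2 else (x.2.1 + o, x.2.2)

lemma fold_split {j o N : ℕ} (hjo : j ≤ o) (hoN : o ≤ N) :
    ∀ (l : List (Bool × ℕ × ℕ)) (LO RO LO' RO' : Finset ℕ),
    (∀ x ∈ l, 1 ≤ x.2.1 ∧ 1 ≤ x.2.2) →
    (∀ k ∈ LO, 1 ≤ k ∧ k ≤ j - 1) → (∀ k ∈ RO, 1 ≤ k) →
    (l.filterMap (fun x => if x.1 then some x.2 else none)).foldl
      (parkStep (j - 1)) (some LO) = some LO' →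
    (l.filterMap (fun x => if x.1 then none else some x.2)).foldl
      (parkStep (N - o)) (some RO) = some RO' →
    (l.map (untag o)).foldl (parkStep N) (some (LO ∪ RO.image (· + o))) =
      some (LO' ∪ RO'.image (· + o)) := by
  intro l
  induction l with
  | nil =>
    intro LO RO LO' RO' _ _ _ hL hR
    simp only [List.filterMap_nil, List.foldl_nil, Option.some_inj] at hL hR
    subst hL; subst hR
    simp
  | cons x l ih =>
    intro LO RO LO' RO' hall hLO hRO hL hR
    obtain ⟨b, c, t⟩ := x
    have hct : 1 ≤ c ∧ 1 ≤ t := hall _ (List.mem_cons_self)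
    have hall' : ∀ x ∈ l, 1 ≤ x.2.1 ∧ 1 ≤ x.2.2 :=
      fun x hx => hall x (List.mem_cons_of_mem _ hx)
    cases b with
    | true =>
      rw [show List.filterMap (fun x => if x.1 = true then some x.2 else none)
            ((true, c, t) :: l) =
          (c, t) :: List.filterMap (fun x => if x.1 = true then some x.2 else none) l from rfl,
        List.foldl_cons] at hL
      rw [show List.filterMap (fun x => if x.1 = true then none else some x.2)
            ((true, c, t) :: l) =
          List.filterMap (fun x => if x.1 = true then none else some x.2) l from rfl] at hR
      obtain ⟨LO1, hLO1⟩ := foldl_parkStep_some hL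
      rw [hLO1] at hL
      have hstep := left_step (LO := LO) (RO := RO) hjo hoN hRO hct.1 hct.2 hLO1
      have hLO1inv := left_step_inv hLO hct.1 hct.2 hLO1
      rw [List.map_cons, show untag o (true, c, t) = (c, t) from rfl, List.foldl_cons, hstep]
      exact ih LO1 RO LO' RO' hall' hLO1inv hRO hL hR
    | false =>
      rw [show List.filterMap (fun x => if x.1 = true then some x.2 else none)
            ((false, c, t) :: l) =
          List.filterMap (fun x => if x.1 = true then some x.2 else none) l from rfl] at hL
      rw [show List.filterMap (fun x => if x.1 = true then none else some x.2)
            ((false, c, t) :: l) =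
          (c, t) :: List.filterMap (fun x => if x.1 = true then none else some x.2) l from rfl,
        List.foldl_cons] at hR
      obtain ⟨RO1, hRO1⟩ := foldl_parkStep_some hR
      rw [hRO1] at hR
      have hstep := right_step (LO := LO) (RO := RO) hjo hoN hLO hct.1 hct.2 hRO1
      have hRO1inv := right_step_inv hRO hct.1 hct.2 hRO1
      rw [List.map_cons, show untag o (false, c, t) = (c + o, t) from rfl, List.foldl_cons, hstep]
      exact ih LO RO1 LO' RO' hall' hLO hRO1inv hL hR

lemma fold_split_back {j o N : ℕ} (hjo : j ≤ o) (hoN : o ≤ N) (hj : 1 ≤ j) :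
    ∀ (l : List (ℕ × ℕ)) (LO RO occ' : Finset ℕ),
    (∀ x ∈ l, 1 ≤ x.1 ∧ 1 ≤ x.2) →
    (∀ k ∈ LO, 1 ≤ k ∧ k ≤ j - 1) → (∀ k ∈ RO, 1 ≤ k) →
    l.foldl (parkStep N) (some (LO ∪ RO.image (· + o))) = some occ' →
    (∀ k, j ≤ k → k ≤ o → k ∉ occ') →
    ∃ tl : List (Bool × ℕ × ℕ), l = tl.map (untag o) ∧
      (∀ x ∈ tl, 1 ≤ x.2.1 ∧ 1 ≤ x.2.2) ∧
      ∃ LO' RO', occ' = LO' ∪ RO'.image (· + o) ∧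
        (∀ k ∈ LO', 1 ≤ k ∧ k ≤ j - 1) ∧ (∀ k ∈ RO', 1 ≤ k) ∧
        (tl.filterMap (fun x => if x.1 then some x.2 else none)).foldl
          (parkStep (j - 1)) (some LO) = some LO' ∧
        (tl.filterMap (fun x => if x.1 then none else some x.2)).foldl
          (parkStep (N - o)) (some RO) = some RO' := by
  intro l
  induction l with
  | nil =>
    intro LO RO occ' _ hLO hRO hfold _
    simp only [List.foldl_nil, Option.some_inj] at hfold
    exact ⟨[], rfl, by simp, LO, RO, hfold.symm, hLO, hRO, rfl, rfl⟩
  | cons x l ih =>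
    intro LO RO occ' hall hLO hRO hfold hhole
    obtain ⟨c, t⟩ := x
    have hct : 1 ≤ c ∧ 1 ≤ t := hall _ (List.mem_cons_self)
    have hall' : ∀ x ∈ l, 1 ≤ x.1 ∧ 1 ≤ x.2 :=
      fun x hx => hall x (List.mem_cons_of_mem _ hx)
    simp only [List.foldl_cons] at hfold
    obtain ⟨occ1, hocc1⟩ := foldl_parkStep_some hfold
    rw [hocc1] at hfold
    have hsub : occ1 ⊆ occ' := subset_of_foldl_parkStep hfold
    have hhole1 : ∀ k, j ≤ k → k ≤ o → k ∉ occ1 :=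
      fun k h1 h2 hk => hhole k h1 h2 (hsub hk)
    rcases combined_step_cases hjo hoN hLO hRO hj hct.1 hct.2 hocc1 hhole1 with
      ⟨LO1, hstep, rfl⟩ | ⟨hc, RO1, hstep, rfl⟩
    · have hLO1inv := left_step_inv hLO hct.1 hct.2 hstep
      obtain ⟨tl, htl, htlall, LO', RO', heq, hLOinv', hROinv', hL, hR⟩ :=
        ih _ _ _ hall' hLO1inv hRO hfold hhole
      refine ⟨(true, c, t) :: tl, ?_, ?_, LO', RO', heq, hLOinv', hROinv', ?_, ?_⟩
      · rw [List.map_cons, ← htl, show untag o (true, c, t) = (c, t) from rfl]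
      · intro x hx
        rcases List.mem_cons.mp hx with rfl | hx
        · exact hct
        · exact htlall x hx
      · simpa [List.filterMap_cons, hstep] using hL
      · simpa [List.filterMap_cons] using hR
    · have hRO1inv := right_step_inv hRO (show 1 ≤ c - o by omega) hct.2 hstep
      obtain ⟨tl, htl, htlall, LO', RO', heq, hLOinv', hROinv', hL, hR⟩ :=
        ih _ _ _ hall' hLO hRO1inv hfold hhole
      refine ⟨(false, c - o, t) :: tl, ?_, ?_, LO', RO', heq, hLOinv', hROinv', ?_, ?_⟩
      · rw [List.map_cons, ← htl, show untag o (false, c - o, t) = (c - o + o, t) from rfl,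
          show c - o + o = c from by omega]
      · intro x hx
        rcases List.mem_cons.mp hx with rfl | hx
        · exact ⟨show 1 ≤ c - o by omega, hct.2⟩
        · exact htlall x hx
      · simpa [List.filterMap_cons] using hL
      · simpa [List.filterMap_cons, hstep] using hR
lemma filterMap_ite {α β : Type*} (p : α → Bool) (g : α → β) (l : List α) :
    l.filterMap (fun a => if p a then some (g a) else none) = (l.filter p).map g := by
  induction l with
  | nil => rfl
  | cons a l ih =>
    cases hp : p a <;> simp [List.filterMap_cons, List.filter_cons, hp, ih]

lemma sort_eq_filter_finRange {n : ℕ} (L : Finset (Fin n)) :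
    L.sort (· ≤ ·) = (List.finRange n).filter (fun i => decide (i ∈ L)) := by
  refine (fun hp hs => List.Perm.eq_of_pairwise' (Finset.pairwise_sort _ _) hs hp) ?_ ?_
  · refine (List.perm_ext_iff_of_nodup (Finset.sort_nodup _ _)
      ((List.nodup_finRange n).filter _)).mpr fun a => ?_
    simp [Finset.mem_sort, List.mem_filter, List.mem_finRange]
  · exact List.Pairwise.imp le_of_lt (List.Pairwise.filter _ (List.pairwise_lt_finRange n))

lemma ofFn_orderIso_map {n : ℕ} {α : Type*} (L : Finset (Fin n)) (g : Fin n → α) :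
    List.ofFn (fun k : Fin L.card => g ((L.orderIsoOfFin rfl) k)) =
      (L.sort (· ≤ ·)).map g := by
  refine List.ext_getElem (by simp) fun k h1 h2 => ?_
  simp only [List.getElem_ofFn, List.getElem_map]
  rw [Finset.coe_orderIsoOfFin_apply, Finset.orderEmbOfFin_apply]
  simp [Fin.getElem_fin]

lemma filterMap_tagged {n : ℕ} {α : Type*} (L : Finset (Fin n)) (g : Fin n → α) :
    (List.ofFn fun i : Fin n => ((decide (i ∈ L)), g i)).filterMap
        (fun x => if x.1 = true then some x.2 else none) =
      List.ofFn (fun k : Fin L.card => g ((L.orderIsoOfFin rfl) k)) := by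
  rw [List.ofFn_eq_map, List.filterMap_map, ofFn_orderIso_map, sort_eq_filter_finRange]
  rw [← filterMap_ite (fun i => decide (i ∈ L)) g]
  rfl

lemma filterMap_tagged_compl {n : ℕ} {α : Type*} (L : Finset (Fin n)) (g : Fin n → α) :
    (List.ofFn fun i : Fin n => ((decide (i ∈ L)), g i)).filterMap
        (fun x => if x.1 = true then none else some x.2) =
      List.ofFn (fun k : Fin Lᶜ.card => g ((Lᶜ.orderIsoOfFin rfl) k)) := by
  rw [List.ofFn_eq_map, List.filterMap_map, ofFn_orderIso_map, sort_eq_filter_finRange]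
  rw [← filterMap_ite (fun i => decide (i ∈ Lᶜ)) g]
  congr 1
  funext i
  by_cases h : i ∈ L <;> simp [h]

lemma sum_orderIso {n : ℕ} (L : Finset (Fin n)) (g : Fin n → ℕ) :
    ∑ k : Fin L.card, g ((L.orderIsoOfFin rfl) k) = ∑ l ∈ L, g l := by
  rw [← Finset.sum_coe_sort L g]
  exact Fintype.sum_equiv (L.orderIsoOfFin rfl).toEquiv _ _ (fun k => rfl)

lemma pref_le_of_foldl {M : ℕ} : ∀ {l : List (ℕ × ℕ)} {occ occ' : Finset ℕ},
    (∀ x ∈ l, 1 ≤ x.2) → l.foldl (parkStep M) (some occ) = some occ' →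
    ∀ x ∈ l, x.1 ≤ M := by
  intro l
  induction l with
  | nil => intro _ _ _ _ x hx; exact absurd hx List.not_mem_nil
  | cons a l ih =>
    intro occ occ' hsz h x hx
    simp only [List.foldl_cons] at h
    obtain ⟨occ1, h1⟩ := foldl_parkStep_some h
    rw [h1] at h
    rcases List.mem_cons.mp hx with rfl | hx
    · obtain ⟨c, t⟩ := x
      obtain ⟨⟨hN, _⟩, _⟩ := parkStep_some_iff'.mp h1
      have := firstFree_le_spec occ c
      have ht := hsz (c, t) (List.mem_cons_self)
      simp only at ht
      omega
    · exact ih (fun x hx => hsz x (List.mem_cons_of_mem _ hx)) h x hx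

lemma foldl_full {M : ℕ} {l : List (ℕ × ℕ)} {occ occ' : Finset ℕ}
    (hc : ∀ x ∈ l, 1 ≤ x.1) (hocc : ∀ k ∈ occ, 1 ≤ k ∧ k ≤ M)
    (h : l.foldl (parkStep M) (some occ) = some occ')
    (hcard : occ.card + (l.map Prod.snd).sum = M) :
    occ' = Finset.Icc 1 M := by
  have hsub : occ' ⊆ Finset.Icc 1 M := by
    intro k hk
    have := bounded_of_foldl_parkStep hc hocc h k hk
    simp only [Finset.mem_Icc]
    omega
  refine Finset.eq_of_subset_of_card_le hsub ?_
  rw [card_of_foldl_parkStep h, hcard, Nat.card_Icc]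
  omega
section Main

variable {n : ℕ} (y : Fin (n + 1) → ℕ) (z : ℕ) (L : Finset (Fin n))

/-- Position where the last car parks, given the set `L` of cars parking to its left. -/
def jval : ℕ := z + ∑ l ∈ L, y l.castSucc

/-- Last spot of the last car's block. -/
def oval : ℕ := jval y z L + y (Fin.last n) - 1

/-- Total number of spots. -/
def Nval : ℕ := z - 1 + ∑ i, y i

/-- Sizes of the cars in `L`, in increasing order of index. -/
def yLf : Fin L.card → ℕ := fun k => y ((L.orderIsoOfFin rfl) k).1.castSucc

/-- Sizes of the cars not in `L`, in increasing order of index. -/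
def yRf : Fin Lᶜ.card → ℕ := fun k => y ((Lᶜ.orderIsoOfFin rfl) k).1.castSucc

/-- Component preferences of the first `n` cars. -/
def prefC {n : ℕ} (L : Finset (Fin n)) (cL : Fin L.card → ℕ) (cR : Fin Lᶜ.card → ℕ) : Fin n → ℕ := fun i =>
  if hm : i ∈ L then cL ((L.orderIsoOfFin rfl).symm ⟨i, hm⟩)
  else cR ((Lᶜ.orderIsoOfFin rfl).symm ⟨i, Finset.mem_compl.mpr hm⟩)

/-- Combined preferences of the first `n` cars built from component preferences. -/
def prefF (cL : Fin L.card → ℕ) (cR : Fin Lᶜ.card → ℕ) : Fin n → ℕ := fun i =>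
  if i ∈ L then prefC L cL cR i else prefC L cL cR i + oval y z L

/-- The occupied set after the first `n` cars have parked. -/
def Ufin : Finset ℕ :=
  Finset.Icc 1 (jval y z L - 1) ∪
    (Finset.Icc 1 (Nval y z - oval y z L)).image (· + oval y z L)

lemma sum_yLf : ∑ k, yLf y L k = ∑ l ∈ L, y l.castSucc :=
  sum_orderIso L (fun l => y l.castSucc)

lemma sum_yRf : ∑ k, yRf y L k = ∑ l ∈ Lᶜ, y l.castSucc :=
  sum_orderIso Lᶜ (fun l => y l.castSucc)

lemma prefC_orderIso {n : ℕ} (L : Finset (Fin n)) (cL : Fin L.card → ℕ) (cR : Fin Lᶜ.card → ℕ) (k : Fin L.card) :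
    prefC L cL cR ((L.orderIsoOfFin rfl) k) = cL k := by
  unfold prefC
  rw [dif_pos ((L.orderIsoOfFin rfl) k).2]
  congr 1
  rw [Subtype.coe_eta]
  exact OrderIso.symm_apply_apply _ _

lemma prefC_orderIso_compl {n : ℕ} (L : Finset (Fin n)) (cL : Fin L.card → ℕ) (cR : Fin Lᶜ.card → ℕ) (k : Fin Lᶜ.card) :
    prefC L cL cR ((Lᶜ.orderIsoOfFin rfl) k) = cR k := by
  have hmem : ((Lᶜ.orderIsoOfFin rfl) k).1 ∉ L :=
    Finset.mem_compl.mp ((Lᶜ.orderIsoOfFin rfl) k).2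
  unfold prefC
  rw [dif_neg hmem]
  congr 1
  rw [show (⟨((Lᶜ.orderIsoOfFin rfl) k).1, Finset.mem_compl.mpr hmem⟩ : {x // x ∈ (Lᶜ : Finset (Fin n))}) =
    (Lᶜ.orderIsoOfFin rfl) k from Subtype.ext rfl]
  exact OrderIso.symm_apply_apply _ _

lemma jval_facts (hy : ∀ i, 1 ≤ y i) (hz : 1 ≤ z) :
    z ≤ jval y z L ∧ jval y z L ≤ oval y z L ∧ oval y z L ≤ Nval y z ∧
      Nval y z - oval y z L = ∑ l ∈ Lᶜ, y l.castSucc ∧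
      jval y z L - 1 = z - 1 + ∑ l ∈ L, y l.castSucc := by
  have hs : 1 ≤ y (Fin.last n) := hy _
  have hN : Nval y z = z - 1 + ∑ i : Fin n, y i.castSucc + y (Fin.last n) := by
    unfold Nval
    rw [Fin.sum_univ_castSucc]
    omega
  have hsum : ∑ l ∈ L, y l.castSucc + ∑ l ∈ Lᶜ, y l.castSucc = ∑ i : Fin n, y i.castSucc :=
    Finset.sum_add_sum_compl L _
  simp only [oval, jval]
  omega

lemma combined_run (hy : ∀ i, 1 ≤ y i) (hz : 1 ≤ z)
    (cL : Fin L.card → ℕ) (cR : Fin Lᶜ.card → ℕ)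
    (hcL1 : ∀ k, 1 ≤ cL k) (hcR1 : ∀ k, 1 ≤ cR k)
    (hLpark : parkFold L.card (yLf y L) z cL ≠ none)
    (hRpark : parkFold Lᶜ.card (yRf y L) 1 cR ≠ none) :
    (List.ofFn fun i : Fin n => ((prefF y z L cL cR i, y i.castSucc) : ℕ × ℕ)).foldl
      (parkStep (Nval y z)) (some (Finset.Ico 1 z)) = some (Ufin y z L) := by
  obtain ⟨hzj, hjo, hoN, hNo, hj1⟩ := jval_facts y z L hy hz
  obtain ⟨LO', hLO'⟩ := Option.ne_none_iff_exists'.mp hLpark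
  obtain ⟨RO', hRO'⟩ := Option.ne_none_iff_exists'.mp hRpark
  unfold parkFold at hLO' hRO'
  rw [show z - 1 + ∑ k, yLf y L k = jval y z L - 1 by rw [sum_yLf]; omega] at hLO'
  rw [show 1 - 1 + ∑ k, yRf y L k = Nval y z - oval y z L by rw [sum_yRf]; omega] at hRO'
  rw [Finset.Ico_self] at hRO'
  have hLO'full : LO' = Finset.Icc 1 (jval y z L - 1) := by
    refine foldl_full ?_ ?_ hLO' ?_
    · intro x hx
      obtain ⟨k, rfl⟩ := List.mem_ofFn.mp hx
      exact hcL1 k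
    · intro k hk
      simp only [Finset.mem_Ico] at hk
      omega
    · rw [List.map_ofFn]
      rw [show Prod.snd ∘ (fun k => ((cL k, yLf y L k) : ℕ × ℕ)) = yLf y L from rfl]
      rw [List.sum_ofFn, sum_yLf, Nat.card_Ico]
      omega
  have hRO'full : RO' = Finset.Icc 1 (Nval y z - oval y z L) := by
    refine foldl_full ?_ ?_ hRO' ?_
    · intro x hx
      obtain ⟨k, rfl⟩ := List.mem_ofFn.mp hx
      exact hcR1 k
    · intro k hk
      simp at hk
    · rw [List.map_ofFn]
      rw [show Prod.snd ∘ (fun k => ((cR k, yRf y L k) : ℕ × ℕ)) = yRf y L from rfl]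
      rw [List.sum_ofFn, sum_yRf, Finset.card_empty]
      omega
  set tl := List.ofFn fun i : Fin n =>
    ((decide (i ∈ L)), (prefC L cL cR i, y i.castSucc)) with htl
  have htlall : ∀ x ∈ tl, 1 ≤ x.2.1 ∧ 1 ≤ x.2.2 := by
    intro x hx
    obtain ⟨i, rfl⟩ := List.mem_ofFn.mp hx
    refine ⟨?_, hy _⟩
    unfold prefC
    split
    · exact hcL1 _
    · exact hcR1 _
  have hleftlist : tl.filterMap (fun x => if x.1 = true then some x.2 else none) =
      List.ofFn fun k : Fin L.card => ((cL k, yLf y L k) : ℕ × ℕ) := by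
    rw [htl, filterMap_tagged L (fun i => (prefC L cL cR i, y i.castSucc))]
    congr 1
    funext k
    rw [Prod.ext_iff]
    exact ⟨prefC_orderIso L cL cR k, rfl⟩
  have hrightlist : tl.filterMap (fun x => if x.1 = true then none else some x.2) =
      List.ofFn fun k : Fin Lᶜ.card => ((cR k, yRf y L k) : ℕ × ℕ) := by
    rw [htl, filterMap_tagged_compl L (fun i => (prefC L cL cR i, y i.castSucc))]
    congr 1
    funext k
    rw [Prod.ext_iff]
    exact ⟨prefC_orderIso_compl L cL cR k, rfl⟩
  have hsplit := fold_split hjo hoN tl (Finset.Ico 1 z) ∅ LO' RO' htlall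
    (by intro k hk; simp only [Finset.mem_Ico] at hk; omega)
    (by intro k hk; simp at hk)
    (by rw [hleftlist]; exact hLO')
    (by rw [hrightlist]; exact hRO')
  have htlmap : List.map (untag (oval y z L)) tl =
      List.ofFn fun i : Fin n => ((prefF y z L cL cR i, y i.castSucc) : ℕ × ℕ) := by
    rw [htl, List.map_ofFn]
    congr 1
    funext i
    by_cases hm : i ∈ L <;> simp [untag, prefF, hm]
  rw [htlmap, Finset.image_empty, Finset.union_empty, hLO'full, hRO'full] at hsplit
  rw [hsplit]
  rfl

end Main
section Main2

variable {n : ℕ} (y : Fin (n + 1) → ℕ) (z : ℕ) (L : Finset (Fin n))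

/-- The combined preference sequence for all `n + 1` cars. -/
def phiF (a : ℕ) (cL : Fin L.card → ℕ) (cR : Fin Lᶜ.card → ℕ) : Fin (n + 1) → ℕ := fun i =>
  if h : (i : ℕ) < n then prefF y z L cL cR ⟨i, h⟩ else a

lemma phiF_castSucc (a : ℕ) (cL : Fin L.card → ℕ) (cR : Fin Lᶜ.card → ℕ) (i : Fin n) :
    phiF y z L a cL cR i.castSucc = prefF y z L cL cR i := by
  unfold phiF
  rw [dif_pos (show ((i.castSucc : Fin (n + 1)) : ℕ) < n from i.isLt)]
  exact congrArg _ (Fin.ext rfl)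

lemma phiF_last (a : ℕ) (cL : Fin L.card → ℕ) (cR : Fin Lᶜ.card → ℕ) :
    phiF y z L a cL cR (Fin.last n) = a := by
  unfold phiF
  rw [dif_neg (by simp)]

lemma mem_Ufin (hy : ∀ i, 1 ≤ y i) (hz : 1 ≤ z) {k : ℕ} : k ∈ Ufin y z L ↔
    (1 ≤ k ∧ k ≤ jval y z L - 1) ∨ (oval y z L + 1 ≤ k ∧ k ≤ Nval y z) := by
  obtain ⟨hzj, hjo, hoN, hNo, hj1⟩ := jval_facts y z L hy hz
  unfold Ufin
  rw [Finset.mem_union, Finset.mem_Icc, mem_shift]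
  constructor
  · rintro (h | ⟨r, hr, rfl⟩)
    · exact Or.inl h
    · rw [Finset.mem_Icc] at hr
      right
      omega
  · rintro (h | h)
    · exact Or.inl h
    · exact Or.inr ⟨k - oval y z L, Finset.mem_Icc.mpr ⟨by omega, by omega⟩, by omega⟩

lemma phi_run (hy : ∀ i, 1 ≤ y i) (hz : 1 ≤ z)
    (a : ℕ) (cL : Fin L.card → ℕ) (cR : Fin Lᶜ.card → ℕ)
    (ha1 : 1 ≤ a) (haj : a ≤ jval y z L)
    (hcL1 : ∀ k, 1 ≤ cL k) (hcR1 : ∀ k, 1 ≤ cR k)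
    (hLpark : parkFold L.card (yLf y L) z cL ≠ none)
    (hRpark : parkFold Lᶜ.card (yRf y L) 1 cR ≠ none) :
    parkFold (n + 1) y z (phiF y z L a cL cR) =
      some (Ufin y z L ∪ Finset.Ico (jval y z L) (jval y z L + y (Fin.last n))) := by
  obtain ⟨hzj, hjo, hoN, hNo, hj1⟩ := jval_facts y z L hy hz
  unfold parkFold
  rw [show (z - 1 + ∑ i, y i) = Nval y z from rfl]
  rw [List.ofFn_succ', List.concat_eq_append, List.foldl_append, List.foldl_cons, List.foldl_nil]
  have hlist : (List.ofFn fun i : Fin n =>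
      ((phiF y z L a cL cR i.castSucc, y i.castSucc) : ℕ × ℕ)) =
      List.ofFn fun i : Fin n => ((prefF y z L cL cR i, y i.castSucc) : ℕ × ℕ) := by
    congr 1
    funext i
    rw [phiF_castSucc]
  rw [show (List.ofFn fun i : Fin n =>
      ((phiF y z L a cL cR (Fin.castSucc i), y (Fin.castSucc i)) : ℕ × ℕ)) =
      List.ofFn fun i : Fin n => ((prefF y z L cL cR i, y i.castSucc) : ℕ × ℕ) from hlist]
  rw [combined_run y z L hy hz cL cR hcL1 hcR1 hLpark hRpark]
  rw [phiF_last]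
  have hfirst : firstFree (Ufin y z L) a = jval y z L := by
    refine firstFree_eq haj ?_ ?_
    · rw [mem_Ufin y z L hy hz]
      omega
    · intro k hk1 hk2
      rw [mem_Ufin y z L hy hz]
      omega
  rw [parkStep_some_iff', hfirst]
  refine ⟨⟨?_, ?_⟩, rfl⟩
  · have := hy (Fin.last n)
    have hov : oval y z L = jval y z L + y (Fin.last n) - 1 := rfl
    omega
  · intro k hk
    simp only [Finset.mem_Ico] at hk
    rw [mem_Ufin y z L hy hz]
    have := hy (Fin.last n)
    have hov : oval y z L = jval y z L + y (Fin.last n) - 1 := rfl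
    omega

end Main2
lemma parkStep_ne_none {N : ℕ} {cs : ℕ × ℕ} {o : Option (Finset ℕ)} {occ' : Finset ℕ}
    (h : parkStep N o cs = some occ') : ∃ occ, o = some occ := by
  cases o with
  | none => exact absurd h (by simp [parkStep])
  | some occ => exact ⟨occ, rfl⟩

lemma untag_snd (o : ℕ) (x : Bool × ℕ × ℕ) : (untag o x).2 = x.2.2 := by
  unfold untag; split <;> rfl

lemma untag_fst (o : ℕ) (x : Bool × ℕ × ℕ) :
    (untag o x).1 = if x.1 then x.2.1 else x.2.1 + o := by
  unfold untag; split <;> simp_all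

section Main3

variable {n : ℕ} (y : Fin (n + 1) → ℕ) (z : ℕ)

lemma decompose (hy : ∀ i, 1 ≤ y i) (hz : 1 ≤ z) (c : Fin (n + 1) → ℕ)
    (hc1 : ∀ i, 1 ≤ c i) (hpark : parkFold (n + 1) y z c ≠ none) :
    ∃ (L : Finset (Fin n)) (a : ℕ) (cL : Fin L.card → ℕ) (cR : Fin Lᶜ.card → ℕ),
      (1 ≤ a ∧ a ≤ jval y z L) ∧
      (∀ k, 1 ≤ cL k ∧ cL k ≤ z - 1 + ∑ k', yLf y L k') ∧
      (∀ k, 1 ≤ cR k ∧ cR k ≤ 1 - 1 + ∑ k', yRf y L k') ∧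
      IsParkingSeq L.card (yLf y L) z cL ∧
      IsParkingSeq Lᶜ.card (yRf y L) 1 cR ∧
      c = phiF y z L a cL cR := by
  have hs1 : 1 ≤ y (Fin.last n) := hy _
  obtain ⟨F, hF⟩ := Option.ne_none_iff_exists'.mp hpark
  unfold parkFold at hF
  rw [show (z - 1 + ∑ i, y i) = Nval y z from rfl] at hF
  -- the street ends up full
  have hFfull : F = Finset.Icc 1 (Nval y z) := by
    refine foldl_full ?_ ?_ hF ?_
    · intro x hx
      obtain ⟨i, rfl⟩ := List.mem_ofFn.mp hx
      exact hc1 i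
    · intro k hk
      simp only [Finset.mem_Ico] at hk
      unfold Nval
      omega
    · rw [List.map_ofFn, show Prod.snd ∘ (fun i => ((c i, y i) : ℕ × ℕ)) = y from rfl,
        List.sum_ofFn, Nat.card_Ico]
      unfold Nval
      omega
  rw [List.ofFn_succ', List.concat_eq_append, List.foldl_append, List.foldl_cons,
    List.foldl_nil] at hF
  obtain ⟨U, hU⟩ := parkStep_ne_none hF
  rw [hU] at hF
  obtain ⟨⟨hbN, hbdisj⟩, hFeq⟩ := parkStep_some_iff'.mp hF
  set j := firstFree U (c (Fin.last n)) with hjdef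
  set s := y (Fin.last n) with hsdef
  have hclast : c (Fin.last n) ≤ j := firstFree_le_spec _ _
  have hjU : j ∉ U := firstFree_not_mem _ _
  have hsub0 : Finset.Ico 1 z ⊆ U := subset_of_foldl_parkStep hU
  have hzj : z ≤ j := by
    by_contra hcon
    exact hjU (hsub0 (Finset.mem_Ico.mpr ⟨le_trans (hc1 _) hclast, by omega⟩))
  have hj1 : (1 : ℕ) ≤ j := le_trans hz hzj
  have hjo : j ≤ j + s - 1 := by omega
  have hoN : j + s - 1 ≤ Nval y z := hbN
  have hUF : U ⊆ F := hFeq ▸ Finset.subset_union_left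
  have hUdisj : ∀ k, j ≤ k → k ≤ j + s - 1 → k ∉ U := by
    intro k h1 h2
    exact hbdisj k (Finset.mem_Ico.mpr ⟨h1, by omega⟩)
  obtain ⟨tl, hmapeq, htlall, LO', RO', hUeq, hLOinv, hROinv, hLfold, hRfold⟩ :=
    fold_split_back hjo hoN hj1
      (List.ofFn fun i : Fin n => ((c i.castSucc, y i.castSucc) : ℕ × ℕ))
      (Finset.Ico 1 z) ∅ U
      (by
        intro x hx
        obtain ⟨i, rfl⟩ := List.mem_ofFn.mp hx
        exact ⟨hc1 _, hy _⟩)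
      (by intro k hk; simp only [Finset.mem_Ico] at hk; omega)
      (by intro k hk; simp at hk)
      (by rw [Finset.image_empty, Finset.union_empty]; exact hU)
      hUdisj
  have hlen : tl.length = n := by
    have := congrArg List.length hmapeq
    simpa using this.symm
  set TL : Fin n → Bool × ℕ × ℕ := fun i => tl.get ⟨i.1, by omega⟩ with hTLdef
  have htl2 : tl = List.ofFn TL := by
    refine List.ext_getElem (by simp [hlen]) fun k h1 h2 => ?_
    simp [List.getElem_ofFn, hTLdef]
  rw [htl2, List.map_ofFn] at hmapeq
  have hfun := List.ofFn_inj.mp hmapeq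
  have hfi : ∀ i : Fin n, ((c i.castSucc, y i.castSucc) : ℕ × ℕ) =
      untag (j + s - 1) (TL i) := fun i => congrFun hfun i
  set tag : Fin n → Bool := fun i => (TL i).1 with htagdef
  set pref : Fin n → ℕ := fun i => (TL i).2.1 with hprefdef
  set L := Finset.univ.filter (fun i : Fin n => tag i = true) with hLdef
  have hmemL : ∀ i, i ∈ L ↔ tag i = true := by
    intro i
    rw [hLdef, Finset.mem_filter]
    simp
  have hysnd : ∀ i, (TL i).2.2 = y i.castSucc := by
    intro i
    have := congrArg Prod.snd (hfi i)
    rw [untag_snd] at this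
    exact this.symm
  have hcfst : ∀ i, c i.castSucc = (if tag i then pref i else pref i + (j + s - 1)) := by
    intro i
    have := congrArg Prod.fst (hfi i)
    rw [untag_fst] at this
    exact this
  have htlofn : tl = List.ofFn (fun i : Fin n => ((decide (i ∈ L)), (pref i, y i.castSucc))) := by
    rw [htl2]
    congr 1
    funext i
    have hdec : decide (i ∈ L) = tag i := by
      cases htag : tag i <;> simp [hmemL i, htag]
    exact Prod.ext hdec.symm (Prod.ext rfl (hysnd i))
  set cL : Fin L.card → ℕ := fun k => pref ((L.orderIsoOfFin rfl) k) with hcLdef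
  set cR : Fin Lᶜ.card → ℕ := fun k => pref ((Lᶜ.orderIsoOfFin rfl) k) with hcRdef
  rw [htlofn, filterMap_tagged L (fun i => ((pref i, y i.castSucc) : ℕ × ℕ))] at hLfold
  rw [htlofn, filterMap_tagged_compl L (fun i => ((pref i, y i.castSucc) : ℕ × ℕ))] at hRfold
  have hL' : (List.ofFn fun k : Fin L.card => ((cL k, yLf y L k) : ℕ × ℕ)).foldl
      (parkStep (j - 1)) (some (Finset.Ico 1 z)) = some LO' := hLfold
  have hR' : (List.ofFn fun k : Fin Lᶜ.card => ((cR k, yRf y L k) : ℕ × ℕ)).foldl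
      (parkStep (Nval y z - (j + s - 1))) (some ∅) = some RO' := hRfold
  -- the left street is full
  have himgmem : ∀ k ∈ RO'.image (· + (j + s - 1)), j + s ≤ k := by
    intro k hk
    obtain ⟨r, hr, rfl⟩ := mem_shift.mp hk
    have := hROinv r hr
    omega
  have hLO'eq : LO' = Finset.Icc 1 (j - 1) := by
    ext k
    rw [Finset.mem_Icc]
    constructor
    · intro hk
      exact (hLOinv k hk).imp id id
    · intro hk
      have hkF : k ∈ F := by
        rw [hFfull, Finset.mem_Icc]
        omega
      rw [hFeq, Finset.mem_union] at hkF
      rcases hkF with hkU | hkb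
      · rw [hUeq, Finset.mem_union] at hkU
        rcases hkU with h | h
        · exact h
        · have := himgmem k h
          omega
      · rw [Finset.mem_Ico] at hkb
        omega
  have hRO'eq : RO' = Finset.Icc 1 (Nval y z - (j + s - 1)) := by
    ext r
    rw [Finset.mem_Icc]
    constructor
    · intro hr
      refine ⟨hROinv r hr, ?_⟩
      have : r + (j + s - 1) ∈ U := by
        rw [hUeq, Finset.mem_union]
        exact Or.inr (mem_shift.mpr ⟨r, hr, rfl⟩)
      have hrF := hUF this
      rw [hFfull, Finset.mem_Icc] at hrF
      omega
    · intro hr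
      have hrF : r + (j + s - 1) ∈ F := by
        rw [hFfull, Finset.mem_Icc]
        omega
      rw [hFeq, Finset.mem_union] at hrF
      rcases hrF with hkU | hkb
      · rw [hUeq, Finset.mem_union] at hkU
        rcases hkU with h | h
        · have := hLOinv _ h
          omega
        · obtain ⟨r', hr', hre⟩ := mem_shift.mp h
          have : r' = r := by omega
          subst this
          exact hr'
      · rw [Finset.mem_Ico] at hkb
        omega
  -- street lengths
  have hstreetL : z - 1 + ∑ k', yLf y L k' = j - 1 := by
    have hcard := card_of_foldl_parkStep hL'
    rw [hLO'eq, Nat.card_Icc, Nat.card_Ico, List.map_ofFn,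
      show Prod.snd ∘ (fun k => ((cL k, yLf y L k) : ℕ × ℕ)) = yLf y L from rfl,
      List.sum_ofFn] at hcard
    omega
  have hjval : jval y z L = j := by
    unfold jval
    rw [← sum_yLf]
    omega
  have hstreetR : (1 : ℕ) - 1 + ∑ k', yRf y L k' = Nval y z - (j + s - 1) := by
    have hcard := card_of_foldl_parkStep hR'
    rw [hRO'eq, Nat.card_Icc, Finset.card_empty, List.map_ofFn,
      show Prod.snd ∘ (fun k => ((cR k, yRf y L k) : ℕ × ℕ)) = yRf y L from rfl,
      List.sum_ofFn] at hcard
    omega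
  have hoval : oval y z L = j + s - 1 := by
    unfold oval
    rw [hjval]
  -- bounds on preferences
  have hpref1 : ∀ i, 1 ≤ pref i := by
    intro i
    have hmem : TL i ∈ tl := by
      rw [htl2]
      exact List.mem_ofFn.mpr ⟨i, rfl⟩
    exact (htlall _ hmem).1
  have hcLb : ∀ k, 1 ≤ cL k ∧ cL k ≤ z - 1 + ∑ k', yLf y L k' := by
    intro k
    refine ⟨hpref1 _, ?_⟩
    rw [hstreetL]
    refine pref_le_of_foldl ?_ hL' (cL k, yLf y L k) ?_
    · intro x hx
      obtain ⟨i, rfl⟩ := List.mem_ofFn.mp hx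
      exact hy _
    · exact List.mem_ofFn.mpr ⟨k, rfl⟩
  have hcRb : ∀ k, 1 ≤ cR k ∧ cR k ≤ 1 - 1 + ∑ k', yRf y L k' := by
    intro k
    refine ⟨hpref1 _, ?_⟩
    rw [hstreetR]
    refine pref_le_of_foldl ?_ hR' (cR k, yRf y L k) ?_
    · intro x hx
      obtain ⟨i, rfl⟩ := List.mem_ofFn.mp hx
      exact hy _
    · exact List.mem_ofFn.mpr ⟨k, rfl⟩
  refine ⟨L, c (Fin.last n), cL, cR, ⟨hc1 _, by omega⟩, hcLb, hcRb, ?_, ?_, ?_⟩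
  · refine ⟨fun k => (hcLb k).1, ?_⟩
    unfold parkFold
    rw [show z - 1 + ∑ i, yLf y L i = j - 1 from hstreetL, hL']
    simp
  · refine ⟨fun k => (hcRb k).1, ?_⟩
    unfold parkFold
    rw [show (1 : ℕ) - 1 + ∑ i, yRf y L i = Nval y z - (j + s - 1) from hstreetR,
      Finset.Ico_self, hR']
    simp
  · have hprefC : ∀ i, prefC L cL cR i = pref i := by
      intro i
      unfold prefC
      split
      · next hm =>
        rw [hcLdef]
        simp only
        rw [OrderIso.apply_symm_apply]
      · next hm =>
        rw [hcRdef]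
        simp only
        rw [OrderIso.apply_symm_apply]
    funext i
    induction i using Fin.lastCases with
    | last => rw [phiF_last]
    | cast i =>
      rw [phiF_castSucc]
      unfold prefF
      rw [hprefC, hoval, hcfst i]
      cases htag : tag i with
      | false =>
        rw [if_neg (by simp : ¬(false = true)), if_neg (fun hm => by
          rw [hmemL i, htag] at hm; exact Bool.false_ne_true hm)]
      | true =>
        rw [if_pos (rfl : (true = true)), if_pos ((hmemL i).mpr htag)]

end Main3

section Final

variable {n : ℕ} (y : Fin (n + 1) → ℕ) (z : ℕ) (L : Finset (Fin n))

lemma phi_state (hy : ∀ i, 1 ≤ y i) (hz : 1 ≤ z)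
    (a : ℕ) (cL : Fin L.card → ℕ) (cR : Fin Lᶜ.card → ℕ)
    (hcL1 : ∀ k, 1 ≤ cL k) (hcR1 : ∀ k, 1 ≤ cR k)
    (hLpark : parkFold L.card (yLf y L) z cL ≠ none)
    (hRpark : parkFold Lᶜ.card (yRf y L) 1 cR ≠ none) :
    (List.ofFn fun i : Fin n => ((phiF y z L a cL cR i.castSucc, y i.castSucc) : ℕ × ℕ)).foldl
      (parkStep (Nval y z)) (some (Finset.Ico 1 z)) = some (Ufin y z L) := by
  rw [show (List.ofFn fun i : Fin n =>
      ((phiF y z L a cL cR i.castSucc, y i.castSucc) : ℕ × ℕ)) =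
      List.ofFn fun i : Fin n => ((prefF y z L cL cR i, y i.castSucc) : ℕ × ℕ) from by
    congr 1
    funext i
    rw [phiF_castSucc]]
  exact combined_run y z L hy hz cL cR hcL1 hcR1 hLpark hRpark

lemma prefF_at_iso (cL : Fin L.card → ℕ) (cR : Fin Lᶜ.card → ℕ) (k : Fin L.card) :
    prefF y z L cL cR ((L.orderIsoOfFin rfl) k).1 = cL k := by
  unfold prefF
  rw [if_pos ((L.orderIsoOfFin rfl) k).2, prefC_orderIso]

lemma prefF_at_iso_compl (cL : Fin L.card → ℕ) (cR : Fin Lᶜ.card → ℕ) (k : Fin Lᶜ.card) :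
    prefF y z L cL cR ((Lᶜ.orderIsoOfFin rfl) k).1 = cR k + oval y z L := by
  unfold prefF
  rw [if_neg (Finset.mem_compl.mp ((Lᶜ.orderIsoOfFin rfl) k).2), prefC_orderIso_compl]

end Final


/-- Recurrence for parking sequences: with cars `1, …, n` indexed by `Fin n` (via
`Fin.castSucc`) and a last car `n+1`, the count satisfies
`f(y₁,…,y_{n+1}; z) = ∑_{L ⊔ R = {1,…,n}} (z + ∑_{l ∈ L} y_l) · f(y_L; z) · f(y_R; 1)`,
where `y_S` is the subsequence of sizes indexed by `S` in increasing order. -/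
theorem numPark_recurrence (n : ℕ) (y : Fin (n + 1) → ℕ) (hy : ∀ i, 1 ≤ y i)
    (z : ℕ) (hz : 1 ≤ z) :
    numPark (n + 1) y z =
      ∑ L : Finset (Fin n),
        (z + ∑ l ∈ L, y l.castSucc) *
          numPark L.card (fun i => y ((L.orderIsoOfFin rfl) i).1.castSucc) z *
          numPark Lᶜ.card (fun i => y (((Lᶜ : Finset (Fin n)).orderIsoOfFin rfl) i).1.castSucc) 1 := by
  classical
  set T := (Fintype.piFinset fun _ : Fin (n + 1) => Finset.Icc 1 (z - 1 + ∑ i, y i)).filter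
    (IsParkingSeq (n + 1) y z) with hT
  set S := (Finset.univ : Finset (Finset (Fin n))).sigma (fun L =>
    (Finset.Icc 1 (jval y z L)) ×ˢ
    (((Fintype.piFinset fun _ : Fin L.card => Finset.Icc 1 (z - 1 + ∑ k, yLf y L k)).filter
        (IsParkingSeq L.card (yLf y L) z)) ×ˢ
      ((Fintype.piFinset fun _ : Fin Lᶜ.card => Finset.Icc 1 (1 - 1 + ∑ k, yRf y L k)).filter
        (IsParkingSeq Lᶜ.card (yRf y L) 1)))) with hS
  have hSmem : ∀ (L : Finset (Fin n)) (a : ℕ) (cL : Fin L.card → ℕ) (cR : Fin Lᶜ.card → ℕ),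
      (⟨L, a, cL, cR⟩ : Σ L : Finset (Fin n), ℕ × (Fin L.card → ℕ) × (Fin Lᶜ.card → ℕ)) ∈ S ↔
      ((1 ≤ a ∧ a ≤ jval y z L) ∧
       (∀ k, 1 ≤ cL k ∧ cL k ≤ z - 1 + ∑ k', yLf y L k') ∧
       IsParkingSeq L.card (yLf y L) z cL ∧
       (∀ k, 1 ≤ cR k ∧ cR k ≤ 1 - 1 + ∑ k', yRf y L k') ∧
       IsParkingSeq Lᶜ.card (yRf y L) 1 cR) := by
    intro L a cL cR
    rw [hS]
    simp only [Finset.mem_sigma, Finset.mem_univ, true_and, Finset.mem_product,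
      Finset.mem_filter, Fintype.mem_piFinset, Finset.mem_Icc]
    tauto
  -- bounds on phiF
  have hphib : ∀ (L : Finset (Fin n)) (a : ℕ) (cL : Fin L.card → ℕ) (cR : Fin Lᶜ.card → ℕ),
      (1 ≤ a ∧ a ≤ jval y z L) →
      (∀ k, 1 ≤ cL k ∧ cL k ≤ z - 1 + ∑ k', yLf y L k') →
      (∀ k, 1 ≤ cR k ∧ cR k ≤ 1 - 1 + ∑ k', yRf y L k') →
      ∀ i, 1 ≤ phiF y z L a cL cR i ∧ phiF y z L a cL cR i ≤ Nval y z := by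
    intro L a cL cR ha hbL hbR i
    obtain ⟨hzj, hjo, hoN, hNo, hj1⟩ := jval_facts y z L hy hz
    have hsL : ∑ k', yLf y L k' = ∑ l ∈ L, y l.castSucc := sum_yLf y L
    have hsR : ∑ k', yRf y L k' = ∑ l ∈ Lᶜ, y l.castSucc := sum_yRf y L
    unfold phiF
    split
    · next h =>
      unfold prefF prefC
      by_cases hm : (⟨(i : ℕ), h⟩ : Fin n) ∈ L
      · rw [if_pos hm, dif_pos hm]
        have := hbL ((L.orderIsoOfFin rfl).symm ⟨_, hm⟩)
        omega
      · rw [if_neg hm, dif_neg hm]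
        have := hbR ((Lᶜ.orderIsoOfFin rfl).symm ⟨_, Finset.mem_compl.mpr hm⟩)
        omega
    · omega
  have hcard : S.card = T.card := by
    refine Finset.card_bij (fun x _ => phiF y z x.1 x.2.1 x.2.2.1 x.2.2.2) ?_ ?_ ?_
    · rintro ⟨L, a, cL, cR⟩ hx
      obtain ⟨ha, hbL, hpL, hbR, hpR⟩ := (hSmem L a cL cR).mp hx
      rw [hT, Finset.mem_filter, Fintype.mem_piFinset]
      constructor
      · intro i
        rw [Finset.mem_Icc]
        exact hphib L a cL cR ha hbL hbR i
      · refine ⟨fun i => (hphib L a cL cR ha hbL hbR i).1, ?_⟩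
        intro hnone
        rw [show parkFold (n + 1) y z (phiF y z L a cL cR) =
          some (Ufin y z L ∪ Finset.Ico (jval y z L) (jval y z L + y (Fin.last n))) from
          phi_run y z L hy hz a cL cR ha.1 ha.2 (fun k => (hbL k).1) (fun k => (hbR k).1)
            hpL.2 hpR.2] at hnone
        exact Option.some_ne_none _ hnone
    · rintro ⟨L1, a1, cL1, cR1⟩ h1 ⟨L2, a2, cL2, cR2⟩ h2 heq
      simp only at heq
      obtain ⟨ha1, hbL1, hpL1, hbR1, hpR1⟩ := (hSmem L1 a1 cL1 cR1).mp h1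
      obtain ⟨ha2, hbL2, hpL2, hbR2, hpR2⟩ := (hSmem L2 a2 cL2 cR2).mp h2
      have hst1 := phi_state y z L1 hy hz a1 cL1 cR1 (fun k => (hbL1 k).1)
        (fun k => (hbR1 k).1) hpL1.2 hpR1.2
      have hst2 := phi_state y z L2 hy hz a2 cL2 cR2 (fun k => (hbL2 k).1)
        (fun k => (hbR2 k).1) hpL2.2 hpR2.2
      rw [show (List.ofFn fun i : Fin n =>
          ((phiF y z L1 a1 cL1 cR1 i.castSucc, y i.castSucc) : ℕ × ℕ)) =
          List.ofFn fun i : Fin n =>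
          ((phiF y z L2 a2 cL2 cR2 i.castSucc, y i.castSucc) : ℕ × ℕ) from by
        congr 1
        funext i
        rw [heq]] at hst1
      rw [hst1] at hst2
      have hUeq : Ufin y z L1 = Ufin y z L2 := Option.some_inj.mp hst2
      obtain ⟨hzj1, hjo1, hoN1, hNo1, hj11⟩ := jval_facts y z L1 hy hz
      obtain ⟨hzj2, hjo2, hoN2, hNo2, hj12⟩ := jval_facts y z L2 hy hz
      have hmono : ∀ (La Lb : Finset (Fin n)), Ufin y z La = Ufin y z Lb →
          jval y z La ≤ jval y z Lb := by
        intro La Lb hU'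
        obtain ⟨hzja, hjoa, hoNa, hNoa, hj1a⟩ := jval_facts y z La hy hz
        obtain ⟨hzjb, hjob, hoNb, hNob, hj1b⟩ := jval_facts y z Lb hy hz
        by_contra hcon
        push_neg at hcon
        have h1 : jval y z Lb ∈ Ufin y z La :=
          (mem_Ufin y z La hy hz).mpr (Or.inl ⟨by omega, by omega⟩)
        rw [hU', mem_Ufin y z Lb hy hz] at h1
        omega
      have hjeq : jval y z L1 = jval y z L2 :=
        le_antisymm (hmono L1 L2 hUeq) (hmono L2 L1 hUeq.symm)
      -- sums determining membership
      have hsL1 : ∑ k', yLf y L1 k' = ∑ l ∈ L1, y l.castSucc := sum_yLf y L1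
      have hsL2 : ∑ k', yLf y L2 k' = ∑ l ∈ L2, y l.castSucc := sum_yLf y L2
      have hLeq : L1 = L2 := by
        ext i
        have hiff1 : i ∈ L1 ↔ phiF y z L1 a1 cL1 cR1 i.castSucc < jval y z L1 := by
          rw [phiF_castSucc]
          unfold prefF prefC
          constructor
          · intro hm
            rw [if_pos hm, dif_pos hm]
            have := hbL1 ((L1.orderIsoOfFin rfl).symm ⟨i, hm⟩)
            omega
          · intro hlt
            by_contra hm
            rw [if_neg hm, dif_neg hm] at hlt
            have := hbR1 ((L1ᶜ.orderIsoOfFin rfl).symm ⟨i, Finset.mem_compl.mpr hm⟩)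
            omega
        have hiff2 : i ∈ L2 ↔ phiF y z L2 a2 cL2 cR2 i.castSucc < jval y z L2 := by
          rw [phiF_castSucc]
          unfold prefF prefC
          constructor
          · intro hm
            rw [if_pos hm, dif_pos hm]
            have := hbL2 ((L2.orderIsoOfFin rfl).symm ⟨i, hm⟩)
            omega
          · intro hlt
            by_contra hm
            rw [if_neg hm, dif_neg hm] at hlt
            have := hbR2 ((L2ᶜ.orderIsoOfFin rfl).symm ⟨i, Finset.mem_compl.mpr hm⟩)
            omega
        rw [hiff1, hiff2, heq, hjeq]
      subst hLeq
      have haeq : a1 = a2 := by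
        have := congrFun heq (Fin.last n)
        rwa [phiF_last, phiF_last] at this
      have hcLeq : cL1 = cL2 := by
        funext k
        have := congrFun heq ((L1.orderIsoOfFin rfl) k).1.castSucc
        rwa [phiF_castSucc, phiF_castSucc, prefF_at_iso, prefF_at_iso] at this
      have hcReq : cR1 = cR2 := by
        funext k
        have := congrFun heq ((L1ᶜ.orderIsoOfFin rfl) k).1.castSucc
        rw [phiF_castSucc, phiF_castSucc, prefF_at_iso_compl, prefF_at_iso_compl] at this
        omega
      rw [haeq, hcLeq, hcReq]
    · intro c hc
      rw [hT, Finset.mem_filter, Fintype.mem_piFinset] at hc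
      obtain ⟨hbox, hc1, hne⟩ := hc
      obtain ⟨L, a, cL, cR, ha, hbL, hbR, hpL, hpR, hceq⟩ :=
        decompose y z hy hz c hc1 hne
      exact ⟨⟨L, a, cL, cR⟩, (hSmem L a cL cR).mpr ⟨ha, hbL, hpL, hbR, hpR⟩, hceq.symm⟩
  have h1 : numPark (n + 1) y z = T.card := by rw [hT]; rfl
  rw [h1, ← hcard, hS, Finset.card_sigma]
  refine Finset.sum_congr rfl fun L _ => ?_
  rw [Finset.card_product, Finset.card_product, Nat.card_Icc, Nat.add_sub_cancel, ← mul_assoc]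
  rfl
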